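/- Compact embedding of Hölder-type spaces (Arzelà–Ascoli extension): let ρ and ρ' be moduli of continuity with ρ(h)/ρ'(h) → 0 as h → 0. Then every sequence (f_n) of continuous functions f_n : [0,1] → ℝ with sup_n ( ‖f_n‖_∞ + |f_n|_ρ ) < ∞ has a subsequence (f_{n_k}) and a limit f ∈ C^{ρ'}_0 such that ‖f_{n_k} − f‖_∞ + |f_{n_k} − f|_{ρ'} → 0 as k → ∞. -/

import Mathlib

open MeasureTheory ProbabilityTheory Filter Topology Set
open scoped ENNReal NNReal

noncomputable section

/-- The interpolated partial sum process of `Y 1, …, Y n`. -/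
def psp (n : ℕ) (Y : ℕ → ℝ) (u : ℝ) : ℝ :=
  ((∑ t ∈ Finset.Icc 1 ⌊u * (n : ℝ)⌋₊, Y t)
    + (u * (n : ℝ) - (⌊u * (n : ℝ)⌋₊ : ℝ)) * Y (⌊u * (n : ℝ)⌋₊ + 1)) / Real.sqrt n

/-- The critical modulus ρ₂(h) = √(h log(e/h)). -/
def rho2 (h : ℝ) : ℝ := Real.sqrt (h * Real.log (Real.exp 1 / h))

/-- Hölder-type seminorm (valued in `ℝ≥0∞`) over pairs `u ≠ v` in `[0,1]`. -/
def holderSemi (ρ : ℝ → ℝ) (f : ℝ → ℝ) : ℝ≥0∞ :=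
  ⨆ (u : ℝ) (v : ℝ) (_ : u ∈ Icc (0:ℝ) 1 ∧ v ∈ Icc (0:ℝ) 1 ∧ u ≠ v),
    ENNReal.ofReal (|f u - f v| / ρ |u - v|)

/-- Hölder-type seminorm restricted to pairs at distance at most `δ`. -/
def holderSemiSmall (ρ : ℝ → ℝ) (f : ℝ → ℝ) (δ : ℝ) : ℝ≥0∞ :=
  ⨆ (u : ℝ) (v : ℝ) (_ : u ∈ Icc (0:ℝ) 1 ∧ v ∈ Icc (0:ℝ) 1 ∧ u ≠ v ∧ |u - v| ≤ δ),
    ENNReal.ofReal (|f u - f v| / ρ |u - v|)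

/-- Sup-norm on `[0,1]`, valued in `ℝ≥0∞`. -/
def supNormE (f : ℝ → ℝ) : ℝ≥0∞ :=
  ⨆ (u : ℝ) (_ : u ∈ Icc (0:ℝ) 1), ENNReal.ofReal |f u|

/-- The Hölder-type norm ‖f‖_∞ + |f|_ρ. -/
def normRho (ρ : ℝ → ℝ) (f : ℝ → ℝ) : ℝ≥0∞ := supNormE f + holderSemi ρ f

/-- A modulus of continuity. -/
structure IsModulus (ρ : ℝ → ℝ) : Prop where
  continuousOn : ContinuousOn ρ (Icc 0 1)
  mono : MonotoneOn ρ (Icc 0 1)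
  zero : ρ 0 = 0
  pos : ∀ h : ℝ, 0 < h → h ≤ 1 → 0 < ρ h

/-- Membership in C^ρ_0. -/
def MemC0 (ρ : ℝ → ℝ) (f : ℝ → ℝ) : Prop :=
  ContinuousOn f (Icc 0 1) ∧
    Tendsto (fun δ => holderSemiSmall ρ f δ) (𝓝[>] (0:ℝ)) (𝓝 0)

/-- A standard Brownian motion (on `[0,∞)`). -/
structure IsStdBrownian {Ω : Type*} [MeasurableSpace Ω] (P : Measure Ω)
    (B : Ω → ℝ → ℝ) : Prop where
  cont : ∀ ω, Continuous (B ω)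
  zero : ∀ ω, B ω 0 = 0
  meas : ∀ u : ℝ, Measurable fun ω => B ω u
  gauss : ∀ u v : ℝ, 0 ≤ u → u ≤ v →
    Measure.map (fun ω => B ω v - B ω u) P = gaussianReal 0 (Real.toNNReal (v - u))
  indep : ∀ (k : ℕ) (t : ℕ → ℝ), Monotone t → (∀ i, 0 ≤ t i) →
    iIndepFun
      (fun i : Fin k => fun ω => B ω (t (i + 1)) - B ω (t i)) P

/-- The (1−α)-quantile of |B|_{ρ₂}. -/
def qAlpha {Ω' : Type*} [MeasurableSpace Ω'] (P' : Measure Ω') (B : Ω' → ℝ → ℝ)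
    (α : ℝ) : ℝ :=
  sInf {t : ℝ | 1 - α ≤ (P' {ω | holderSemi rho2 (B ω) ≤ ENNReal.ofReal t}).toReal}

/-- The difference-based variance estimator σ̂ₙ². -/
def sigmaHatSq (n : ℕ) (Y : ℕ → ℝ) : ℝ :=
  (∑ t ∈ Finset.Icc 2 n, (Y t - Y (t - 1)) ^ 2) / (2 * ((n : ℝ) - 1))

/-- The ψ₂ (sub-Gaussian) Orlicz norm, valued in ℝ≥0∞. -/
def psi2 {Ω : Type*} [MeasurableSpace Ω] (P : Measure Ω) (X : Ω → ℝ) : ℝ≥0∞ :=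
  sInf {c : ℝ≥0∞ | 0 < c ∧ c ≠ ⊤ ∧
    Integrable (fun ω => Real.exp ((X ω) ^ 2 / c.toReal ^ 2)) P ∧
    ∫ ω, Real.exp ((X ω) ^ 2 / c.toReal ^ 2) ∂P ≤ 2}

/-- Finite-dimensional-distribution convergence on [0,1]. -/
def FidiConverges {Ω Ω' : Type*} [MeasurableSpace Ω] [MeasurableSpace Ω']
    (P : Measure Ω) (P' : Measure Ω') (Wn : ℕ → Ω → ℝ → ℝ) (W : Ω' → ℝ → ℝ) : Prop :=
  ∀ (k : ℕ) (u : Fin k → ℝ), (∀ i, u i ∈ Icc (0:ℝ) 1) →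
    ∀ F : BoundedContinuousFunction (Fin k → ℝ) ℝ,
      Tendsto (fun n => ∫ ω, F (fun i => Wn n ω (u i)) ∂P) atTop
        (𝓝 (∫ ω, F (fun i => W ω (u i)) ∂P'))



private lemma aux_le_ofReal {ε : ℝ≥0∞} (hε : 0 < ε) :
    ∃ r : ℝ, 0 < r ∧ ENNReal.ofReal r ≤ ε := by
  rcases eq_or_ne ε ⊤ with h | h
  · exact ⟨1, one_pos, h ▸ le_top⟩
  · exact ⟨ε.toReal, ENNReal.toReal_pos hε.ne' h, by rw [ENNReal.ofReal_toReal h]⟩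

private lemma aux_holderSemi_le {ρ' F : ℝ → ℝ} {r : ℝ}
    (h : ∀ u v : ℝ, u ∈ Icc (0:ℝ) 1 → v ∈ Icc (0:ℝ) 1 → u ≠ v →
      |F u - F v| / ρ' |u - v| ≤ r) :
    holderSemi ρ' F ≤ ENNReal.ofReal r :=
  iSup_le fun u => iSup_le fun v => iSup_le fun hp =>
    ENNReal.ofReal_le_ofReal (h u v hp.1 hp.2.1 hp.2.2)

private lemma aux_holderSemiSmall_le {ρ' F : ℝ → ℝ} {r δ : ℝ}
    (h : ∀ u v : ℝ, u ∈ Icc (0:ℝ) 1 → v ∈ Icc (0:ℝ) 1 → u ≠ v → |u - v| ≤ δ →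
      |F u - F v| / ρ' |u - v| ≤ r) :
    holderSemiSmall ρ' F δ ≤ ENNReal.ofReal r :=
  iSup_le fun u => iSup_le fun v => iSup_le fun hp =>
    ENNReal.ofReal_le_ofReal (h u v hp.1 hp.2.1 hp.2.2.1 hp.2.2.2)

private lemma aux_supNormE_le {F : ℝ → ℝ} {r : ℝ}
    (h : ∀ u ∈ Icc (0:ℝ) 1, |F u| ≤ r) :
    supNormE F ≤ ENNReal.ofReal r :=
  iSup_le fun u => iSup_le fun hu => ENNReal.ofReal_le_ofReal (h u hu)

private lemma aux_le_holderSemi (ρ F : ℝ → ℝ) {u v : ℝ}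
    (hu : u ∈ Icc (0:ℝ) 1) (hv : v ∈ Icc (0:ℝ) 1) (huv : u ≠ v) :
    ENNReal.ofReal (|F u - F v| / ρ |u - v|) ≤ holderSemi ρ F :=
  le_iSup_of_le u (le_iSup_of_le v (le_iSup_of_le ⟨hu, hv, huv⟩ le_rfl))

private lemma aux_le_supNormE (F : ℝ → ℝ) {u : ℝ} (hu : u ∈ Icc (0:ℝ) 1) :
    ENNReal.ofReal |F u| ≤ supNormE F :=
  le_iSup_of_le u (le_iSup_of_le hu le_rfl)

/-- Compact embedding of Hölder-type spaces (Arzelà–Ascoli extension):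
if ρ(h)/ρ'(h) → 0 as h → 0, any sequence bounded in C^ρ has a subsequence
converging in the C^{ρ'} norm to a limit in C^{ρ'}_0. -/
theorem compact_embedding_holder
    (ρ ρ' : ℝ → ℝ) (hρ : IsModulus ρ) (hρ' : IsModulus ρ')
    (hrat : Tendsto (fun h => ρ h / ρ' h) (𝓝[>] (0:ℝ)) (𝓝 0))
    (f : ℕ → ℝ → ℝ) (hcont : ∀ n, ContinuousOn (f n) (Icc 0 1))
    (hbdd : ∃ M : ℝ, ∀ n, normRho ρ (f n) ≤ ENNReal.ofReal M) :
    ∃ φ : ℕ → ℕ, StrictMono φ ∧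
      ∃ g : ℝ → ℝ, MemC0 ρ' g ∧
        Tendsto (fun k => normRho ρ' (fun u => f (φ k) u - g u)) atTop (𝓝 0) := by
  obtain ⟨M₀, hbdd₀⟩ := hbdd
  set M : ℝ := max M₀ 0 with hMdef
  have hM : 0 ≤ M := le_max_right _ _
  have hb : ∀ n, normRho ρ (f n) ≤ ENNReal.ofReal M :=
    fun n => (hbdd₀ n).trans (ENNReal.ofReal_le_ofReal (le_max_left _ _))
  have habs1 : ∀ u ∈ Icc (0:ℝ) 1, ∀ v ∈ Icc (0:ℝ) 1, |u - v| ≤ 1 := by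
    intro u hu v hv
    rw [abs_sub_le_iff]
    constructor <;> linarith [hu.1, hu.2, hv.1, hv.2]
  have hsup : ∀ n, ∀ u ∈ Icc (0:ℝ) 1, |f n u| ≤ M := by
    intro n u hu
    have h1 : ENNReal.ofReal |f n u| ≤ ENNReal.ofReal M :=
      ((aux_le_supNormE (f n) hu).trans le_self_add).trans (hb n)
    exact (ENNReal.ofReal_le_ofReal_iff hM).mp h1
  have hhold : ∀ n, ∀ u ∈ Icc (0:ℝ) 1, ∀ v ∈ Icc (0:ℝ) 1,
      |f n u - f n v| ≤ M * ρ |u - v| := by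
    intro n u hu v hv
    rcases eq_or_ne u v with rfl | huv
    · simp [hρ.zero]
    · have hpos : 0 < |u - v| := abs_pos.mpr (sub_ne_zero.mpr huv)
      have hρpos : 0 < ρ |u - v| := hρ.pos _ hpos (habs1 u hu v hv)
      have h1 : ENNReal.ofReal (|f n u - f n v| / ρ |u - v|) ≤ ENNReal.ofReal M :=
        ((aux_le_holderSemi ρ (f n) hu hv huv).trans le_add_self).trans (hb n)
      have h2 := (ENNReal.ofReal_le_ofReal_iff hM).mp h1
      calc |f n u - f n v| = |f n u - f n v| / ρ |u - v| * ρ |u - v| := by field_simp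
        _ ≤ M * ρ |u - v| := mul_le_mul_of_nonneg_right h2 hρpos.le
  have hmod : ∀ c : ℝ, 0 < c → ∃ δ₁ > (0:ℝ), ∀ h : ℝ, 0 < h → h ≤ 1 → h < δ₁ →
      ρ h ≤ c * ρ' h := by
    intro c hc
    have hev : {h : ℝ | dist (ρ h / ρ' h) 0 < c} ∈ 𝓝[>] (0:ℝ) :=
      Metric.tendsto_nhds.mp hrat c hc
    obtain ⟨δ₁, hδ₁, hsub⟩ := mem_nhdsGT_iff_exists_Ioo_subset.mp hev
    refine ⟨δ₁, hδ₁, fun h h0 h1 hδ => ?_⟩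
    have hmem := hsub ⟨h0, hδ⟩
    rw [Set.mem_setOf_eq, Real.dist_eq, sub_zero] at hmem
    have hρ'h : 0 < ρ' h := hρ'.pos h h0 h1
    exact ((div_lt_iff₀ hρ'h).mp (lt_of_abs_lt hmem)).le
  -- the Arzelà–Ascoli step
  set F : ℕ → (BoundedContinuousFunction (Icc (0:ℝ) 1) ℝ) := fun n =>
    BoundedContinuousFunction.mkOfCompact ⟨(Icc (0:ℝ) 1).restrict (f n), (hcont n).restrict⟩
    with hFdef
  have hFval : ∀ n (x : Icc (0:ℝ) 1), F n x = f n x := fun n x => rfl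
  have hbmod : Tendsto (fun h : ℝ => M * ρ (min (max h 0) 1)) (𝓝 0) (𝓝 0) := by
    have h1 : Tendsto (fun h : ℝ => min (max h 0) 1) (𝓝 0) (𝓝[Icc (0:ℝ) 1] 0) := by
      rw [tendsto_nhdsWithin_iff]
      constructor
      · have hco : Continuous fun h : ℝ => min (max h 0) 1 :=
          (continuous_id.max continuous_const).min continuous_const
        simpa using hco.tendsto 0
      · filter_upwards with h
        exact ⟨le_min (le_max_right _ _) zero_le_one, min_le_right _ _⟩
    have h2 : Tendsto ρ (𝓝[Icc (0:ℝ) 1] 0) (𝓝 0) := by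
      have h3 := hρ.continuousOn 0 ⟨le_refl 0, zero_le_one⟩
      rwa [ContinuousWithinAt, hρ.zero] at h3
    have h4 := (h2.comp h1).const_mul M
    simpa using h4
  have hequi : Equicontinuous ((↑) : Set.range F → (Icc (0:ℝ) 1) → ℝ) := by
    apply Metric.equicontinuous_of_continuity_modulus _ hbmod
    rintro x y ⟨a, n, rfl⟩
    show dist (F n x) (F n y) ≤ M * ρ (min (max (dist x y) 0) 1)
    have h1 : dist x y = |(x:ℝ) - (y:ℝ)| := by rw [Subtype.dist_eq, Real.dist_eq]
    have h2 : |(x:ℝ) - (y:ℝ)| ≤ 1 := habs1 _ x.2 _ y.2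
    rw [h1, max_eq_left (abs_nonneg _), min_eq_left h2]
    rw [hFval, hFval, Real.dist_eq]
    exact hhold n _ x.2 _ y.2
  have hrange : ∀ (b : BoundedContinuousFunction (Icc (0:ℝ) 1) ℝ) (x : Icc (0:ℝ) 1),
      b ∈ Set.range F → b x ∈ Icc (-M) M := by
    rintro b x ⟨n, rfl⟩
    rw [Set.mem_Icc, hFval]
    exact abs_le.mp (hsup n _ x.2)
  have hcomp := BoundedContinuousFunction.arzela_ascoli _ isCompact_Icc _ hrange hequi
  obtain ⟨G, -, φ, hφ, hconv⟩ :=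
    hcomp.tendsto_subseq (fun k : ℕ => subset_closure (Set.mem_range_self k))
  have hpt : ∀ x : Icc (0:ℝ) 1, Tendsto (fun k => f (φ k) x) atTop (𝓝 (G x)) := by
    intro x
    have hc : Continuous fun b : BoundedContinuousFunction (Icc (0:ℝ) 1) ℝ => b x :=
      continuous_eval_const x
    exact (hc.tendsto G).comp hconv
  set g : ℝ → ℝ := fun u => G (Set.projIcc 0 1 zero_le_one u) with hgdef
  have hgval : ∀ (u : ℝ) (hu : u ∈ Icc (0:ℝ) 1), g u = G ⟨u, hu⟩ := by
    intro u hu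
    rw [hgdef]
    simp only [Set.projIcc_of_mem zero_le_one hu]
  have hgpt : ∀ u ∈ Icc (0:ℝ) 1, Tendsto (fun k => f (φ k) u) atTop (𝓝 (g u)) := by
    intro u hu; rw [hgval u hu]; exact hpt ⟨u, hu⟩
  have hghold : ∀ u ∈ Icc (0:ℝ) 1, ∀ v ∈ Icc (0:ℝ) 1, |g u - g v| ≤ M * ρ |u - v| := by
    intro u hu v hv
    have h1 : Tendsto (fun k => |f (φ k) u - f (φ k) v|) atTop (𝓝 |g u - g v|) :=
      ((hgpt u hu).sub (hgpt v hv)).abs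
    exact le_of_tendsto h1 (Filter.Eventually.of_forall fun k => hhold (φ k) u hu v hv)
  have hek : Tendsto (fun k => dist (F (φ k)) G) atTop (𝓝 0) :=
    tendsto_iff_dist_tendsto_zero.mp hconv
  have hunif : ∀ k, ∀ u ∈ Icc (0:ℝ) 1, |f (φ k) u - g u| ≤ dist (F (φ k)) G := by
    intro k u hu
    rw [hgval u hu]
    have h := BoundedContinuousFunction.dist_coe_le_dist
      (f := F (φ k)) (g := G) (⟨u, hu⟩ : Icc (0:ℝ) 1)
    rw [Real.dist_eq, hFval (φ k) ⟨u, hu⟩] at h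
    exact h
  refine ⟨φ, hφ, g, ⟨(G.continuous.comp continuous_projIcc).continuousOn, ?_⟩, ?_⟩
  · -- g ∈ C^{ρ'}_0
    rw [ENNReal.tendsto_nhds_zero]
    intro ε hε
    obtain ⟨r, hr, hrε⟩ := aux_le_ofReal hε
    obtain ⟨δ₁, hδ₁, hρρ'⟩ := hmod (r / (M + 1)) (by positivity)
    have hmem : Set.Ioo (0:ℝ) (min δ₁ 1) ∈ 𝓝[>] (0:ℝ) :=
      Ioo_mem_nhdsGT_of_mem ⟨le_refl 0, lt_min hδ₁ one_pos⟩
    filter_upwards [hmem] with δ hδ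
    refine le_trans ?_ hrε
    apply aux_holderSemiSmall_le
    intro u v hu hv huv hle
    have hpos : 0 < |u - v| := abs_pos.mpr (sub_ne_zero.mpr huv)
    have h1 : |u - v| ≤ 1 := habs1 u hu v hv
    have hlt : |u - v| < δ₁ := lt_of_lt_of_le (lt_of_le_of_lt hle hδ.2) (min_le_left _ _)
    have hρ'pos : 0 < ρ' |u - v| := hρ'.pos _ hpos h1
    have h2 : ρ |u - v| ≤ r / (M + 1) * ρ' |u - v| := hρρ' _ hpos h1 hlt
    have h3 : |g u - g v| ≤ M * ρ |u - v| := hghold u hu v hv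
    rw [div_le_iff₀ hρ'pos]
    have hM1 : (0:ℝ) < M + 1 := by linarith
    have h8 : M * ρ |u - v| ≤ M * (r / (M + 1) * ρ' |u - v|) :=
      mul_le_mul_of_nonneg_left h2 hM
    have h10 : r / (M + 1) * (M + 1) * ρ' |u - v| = r * ρ' |u - v| := by
      rw [div_mul_cancel₀ _ hM1.ne']
    have h9 : 0 ≤ r / (M + 1) * ρ' |u - v| := by positivity
    have h11 : 0 ≤ M * (r / (M + 1) * ρ' |u - v|) := mul_nonneg hM h9
    linarith
  · -- convergence in the C^{ρ'} norm
    rw [ENNReal.tendsto_atTop_zero]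
    intro ε hε
    obtain ⟨r, hr, hrε⟩ := aux_le_ofReal hε
    obtain ⟨δ₁, hδ₁, hρρ'⟩ := hmod (r / (8 * M + 8)) (by positivity)
    set δ : ℝ := min δ₁ 1 with hδdef
    have hδpos : 0 < δ := lt_min hδ₁ one_pos
    have hδ1 : δ ≤ 1 := min_le_right _ _
    have hρ'δ : 0 < ρ' δ := hρ'.pos δ hδpos hδ1
    have hband : (0:ℝ) < min (r / 2) (r * ρ' δ / 4) := lt_min (by linarith) (by positivity)
    obtain ⟨N, hN⟩ := Filter.eventually_atTop.mp
      (hek.eventually_lt tendsto_const_nhds hband)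
    refine ⟨N, fun k hk => ?_⟩
    have hekk := (hN k hk).le
    have he1 : dist (F (φ k)) G ≤ r / 2 := hekk.trans (min_le_left _ _)
    have he2 : dist (F (φ k)) G ≤ r * ρ' δ / 4 := hekk.trans (min_le_right _ _)
    refine le_trans ?_ hrε
    have hs : supNormE (fun u => f (φ k) u - g u) ≤ ENNReal.ofReal (r / 2) :=
      aux_supNormE_le fun u hu => (hunif k u hu).trans he1
    have hh : holderSemi ρ' (fun u => f (φ k) u - g u) ≤ ENNReal.ofReal (r / 2) := by
      apply aux_holderSemi_le
      intro u v hu hv huv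
      have hpos : 0 < |u - v| := abs_pos.mpr (sub_ne_zero.mpr huv)
      have h1 : |u - v| ≤ 1 := habs1 u hu v hv
      have hρ'pos : 0 < ρ' |u - v| := hρ'.pos _ hpos h1
      rw [div_le_iff₀ hρ'pos]
      rcases lt_or_ge |u - v| δ with hcase | hcase
      · have hM1 : (0:ℝ) < 8 * M + 8 := by linarith
        have h2 : ρ |u - v| ≤ r / (8 * M + 8) * ρ' |u - v| :=
          hρρ' _ hpos h1 (lt_of_lt_of_le hcase (min_le_left _ _))
        have h3 := hhold (φ k) u hu v hv
        have h4 := hghold u hu v hv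
        have h5 : |(f (φ k) u - g u) - (f (φ k) v - g v)|
            ≤ |f (φ k) u - f (φ k) v| + |g u - g v| := by
          have heq : (f (φ k) u - g u) - (f (φ k) v - g v)
              = (f (φ k) u - f (φ k) v) - (g u - g v) := by ring
          rw [heq, sub_eq_add_neg]
          refine (abs_add_le _ _).trans ?_
          rw [abs_neg]
        have h8 : 2 * M * ρ |u - v| ≤ 2 * M * (r / (8 * M + 8) * ρ' |u - v|) :=
          mul_le_mul_of_nonneg_left h2 (by linarith)
        have h10 : r / (8 * M + 8) * (8 * M + 8) * ρ' |u - v| = r * ρ' |u - v| := by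
          rw [div_mul_cancel₀ _ hM1.ne']
        have h9 : 0 ≤ r / (8 * M + 8) * ρ' |u - v| := by positivity
        have h11 : 0 ≤ M * (r / (8 * M + 8) * ρ' |u - v|) := mul_nonneg hM h9
        linarith
      · have h2 : ρ' δ ≤ ρ' |u - v| :=
          hρ'.mono ⟨hδpos.le, hδ1⟩ ⟨abs_nonneg _, h1⟩ hcase
        have h3 := hunif k u hu
        have h4 := hunif k v hv
        have h5 : |(f (φ k) u - g u) - (f (φ k) v - g v)|
            ≤ |f (φ k) u - g u| + |f (φ k) v - g v| := by
          rw [sub_eq_add_neg]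
          refine (abs_add_le _ _).trans ?_
          rw [abs_neg]
        have h6 : r * ρ' δ ≤ r * ρ' |u - v| := mul_le_mul_of_nonneg_left h2 hr.le
        linarith
    calc normRho ρ' (fun u => f (φ k) u - g u)
        = supNormE (fun u => f (φ k) u - g u)
          + holderSemi ρ' (fun u => f (φ k) u - g u) := rfl
      _ ≤ ENNReal.ofReal (r / 2) + ENNReal.ofReal (r / 2) := add_le_add hs hh
      _ = ENNReal.ofReal r := by
          rw [← ENNReal.ofReal_add (by linarith) (by linarith)]
          norm_num


end
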